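/- An infinite set of inequality clauses over a fixed finite set of integer terms, closed in the sense above, is logically equivalent to a finite subset: Let s, t : Fin n → ℤ and let Q be any set of tuples in (Fin n → ℕ). Then there is a finite subset Q' ⊆ Q such that for every k ∈ Q there is k' ∈ Q' with (∃ l, s l < t l + k' l) → (∃ l, s l < t l + k l); equivalently, the conjunction over Q of the clauses C(k) is equivalent to the conjunction over Q' of the clauses C(k'). -/

import Mathlib

theorem stmt10 (n : ℕ) (s t : Fin n → ℤ) (Q : Set (Fin n → ℕ)) :
    ∃ Q' ⊆ Q, Q'.Finite ∧
      ((∀ k' ∈ Q', ∃ l, s l < t l + (k' l : ℤ)) ↔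
       (∀ k ∈ Q, ∃ l, s l < t l + (k l : ℤ))) := by
  classical
  set M : Set (Fin n → ℕ) := {m | m ∈ Q ∧ ∀ m' ∈ Q, m' ≤ m → m = m'} with hM
  have hMQ : M ⊆ Q := fun m hm => hm.1
  have hanti : IsAntichain (· ≤ ·) M := by
    intro a ha b hb hab h
    exact hab (hb.2 a ha.1 h).symm
  have hfin : M.Finite :=
    hanti.finite_of_partiallyWellOrderedOn (Set.isPWO_of_wellQuasiOrderedLE M)
  have hmin : ∀ k ∈ Q, ∃ m ∈ M, m ≤ k := by
    intro k hk
    induction' hN : (∑ i, k i) using Nat.strong_induction_on with N ih generalizing k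
    by_cases h : ∀ m' ∈ Q, m' ≤ k → k = m'
    · exact ⟨k, ⟨hk, h⟩, le_refl k⟩
    · push_neg at h
      obtain ⟨m', hm'Q, hle, hne⟩ := h
      have hlt : ∑ i, m' i < ∑ i, k i := by
        have hle' : ∑ i, m' i ≤ ∑ i, k i := Finset.sum_le_sum fun i _ => hle i
        rcases lt_or_eq_of_le hle' with h | h
        · exact h
        · exact absurd (funext fun i => le_antisymm (hle i)
            (by
              by_contra hc
              push_neg at hc
              have := Finset.sum_lt_sum (fun i _ => hle i) ⟨i, Finset.mem_univ i, hc⟩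
              omega)).symm hne
      obtain ⟨m, hmM, hmle⟩ := ih (∑ i, m' i) (hN ▸ hlt) m' hm'Q rfl
      exact ⟨m, hmM, le_trans hmle hle⟩
  refine ⟨M, hMQ, hfin, ⟨fun h k hk => ?_, fun h k hk => h k (hMQ hk)⟩⟩
  obtain ⟨m, hmM, hmle⟩ := hmin k hk
  obtain ⟨l, hl⟩ := h m hmM
  have h2 : (m l : ℤ) ≤ (k l : ℤ) := Int.ofNat_le.mpr (hmle l)
  exact ⟨l, by omega⟩
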